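/- Let β ∈ (1,2) and define T_β on [0, 1/(β-1)] \ (1/β, 1/(β(β-1))) by T_β(x) = βx for x ∈ [0, 1/β] and T_β(x) = βx - 1 for x ∈ [1/(β(β-1)), 1/(β-1)]. Then x ∈ (0, 1/(β-1)) has a unique binary β-representation if and only if the forward orbit of x under T_β is defined for all n ≥ 0 and never enters the gap Δ_β = [1/β, 1/(β(β-1))]. -/

import Mathlib

namespace BetaRepAux



noncomputable def T (β y : ℝ) : ℝ := if y < 1/β then β * y else β * y - 1

noncomputable def orb (β x : ℝ) : ℕ → ℝ
  | 0 => x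
  | n+1 => T β (orb β x n)

noncomputable def dig (β x : ℝ) (n : ℕ) : ℕ := if orb β x n < 1/β then 0 else 1

def cons (d : ℕ) (δ : ℕ → ℕ) : ℕ → ℕ
  | 0 => d
  | n+1 => δ n

lemma dig_le (β x : ℝ) (n : ℕ) : dig β x n ≤ 1 := by
  unfold dig; split <;> norm_num

lemma orb_succ (β x : ℝ) (n : ℕ) :
    orb β x (n+1) = β * orb β x n - dig β x n := by
  show T β (orb β x n) = _
  unfold T dig; split <;> simp

lemma orb_shift (β x : ℝ) (n : ℕ) : orb β x (n+1) = orb β (T β x) n := by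
  induction n with
  | zero => rfl
  | succ n ih => show T β (orb β x (n+1)) = T β (orb β (T β x) n); rw [ih]

lemma T_mem {β : ℝ} (hβ1 : 1 < β) (hβ2 : β < 2) {y : ℝ}
    (hy : y ∈ Set.Icc (0:ℝ) (1/(β-1))) : T β y ∈ Set.Icc (0:ℝ) (1/(β-1)) := by
  have hb0 : (0:ℝ) < β := by linarith
  have hb1 : (0:ℝ) < β - 1 := by linarith
  have hL1 : (1:ℝ) ≤ 1/(β-1) := by
    rw [le_div_iff₀ hb1]; linarith
  obtain ⟨h0, h1⟩ := hy
  unfold T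
  split_ifs with h
  · constructor
    · positivity
    · have : β * y < β * (1/β) := by
        apply mul_lt_mul_of_pos_left h hb0
      rw [mul_one_div, div_self (ne_of_gt hb0)] at this
      linarith
  · push_neg at h
    constructor
    · have : β * (1/β) ≤ β * y := mul_le_mul_of_nonneg_left h (le_of_lt hb0)
      rw [mul_one_div, div_self (ne_of_gt hb0)] at this
      linarith
    · have : β * y ≤ β * (1/(β-1)) := mul_le_mul_of_nonneg_left h1 (le_of_lt hb0)
      rw [mul_one_div] at this
      have hE : β / (β-1) = 1/(β-1) + 1 := by field_simp; ring
      linarith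

lemma orb_mem {β : ℝ} (hβ1 : 1 < β) (hβ2 : β < 2) {x : ℝ}
    (hx : x ∈ Set.Icc (0:ℝ) (1/(β-1))) (n : ℕ) :
    orb β x n ∈ Set.Icc (0:ℝ) (1/(β-1)) := by
  induction n with
  | zero => exact hx
  | succ n ih => exact T_mem hβ1 hβ2 ih




lemma summable_rep {β : ℝ} (hβ1 : 1 < β) {ε : ℕ → ℕ} (h1 : ∀ n, ε n ≤ 1) :
    Summable (fun n => (ε n : ℝ) / β ^ (n+1)) := by
  have hb0 : (0:ℝ) < β := by linarith
  have hlt : 1/β < 1 := by rw [div_lt_one hb0]; exact hβ1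
  have hg : Summable (fun n : ℕ => (1/β)^n * (1/β)) :=
    (summable_geometric_of_lt_one (by positivity) hlt).mul_right _
  refine Summable.of_nonneg_of_le (fun n => by positivity) (fun n => ?_) hg
  have hεn : (ε n : ℝ) ≤ 1 := by exact_mod_cast h1 n
  have h2 : (1/β)^n * (1/β) = 1 / β^(n+1) := by
    rw [div_pow, one_pow, div_mul_div_comm, one_mul, ← pow_succ]
  rw [h2]
  apply div_le_div_of_nonneg_right hεn (by positivity) |>.trans_eq rfl
  
lemma tsum_geom_aux {β : ℝ} (hβ1 : 1 < β) :
    ∑' n : ℕ, (1/β)^n * (1/β) = 1/(β-1) := by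
  have hb0 : (0:ℝ) < β := by linarith
  have hlt : 1/β < 1 := by rw [div_lt_one hb0]; exact hβ1
  rw [tsum_mul_right, tsum_geometric_of_lt_one (by positivity) hlt]
  have hb1 : β - 1 ≠ 0 := by intro h; rw [sub_eq_zero] at h; linarith
  field_simp

lemma rep_le_L {β : ℝ} (hβ1 : 1 < β) {ε : ℕ → ℕ} (h1 : ∀ n, ε n ≤ 1) :
    ∑' n : ℕ, (ε n : ℝ) / β ^ (n+1) ≤ 1/(β-1) := by
  have hb0 : (0:ℝ) < β := by linarith
  rw [← tsum_geom_aux hβ1]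
  have hlt : 1/β < 1 := by rw [div_lt_one hb0]; exact hβ1
  refine Summable.tsum_le_tsum (fun n => ?_) (summable_rep hβ1 h1)
    ((summable_geometric_of_lt_one (by positivity) hlt).mul_right _)
  have hεn : (ε n : ℝ) ≤ 1 := by exact_mod_cast h1 n
  have h2 : (1/β)^n * (1/β) = 1 / β^(n+1) := by
    rw [div_pow, one_pow, div_mul_div_comm, one_mul, ← pow_succ]
  rw [h2]
  exact div_le_div_of_nonneg_right hεn (by positivity) |>.trans_eq rfl

lemma rep_nonneg {β : ℝ} (hβ1 : 1 < β) (ε : ℕ → ℕ) :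
    0 ≤ ∑' n : ℕ, (ε n : ℝ) / β ^ (n+1) := by
  have hb0 : (0:ℝ) < β := by linarith
  exact tsum_nonneg (fun n => by positivity)

lemma first_le {β : ℝ} (hβ1 : 1 < β) {ε : ℕ → ℕ} (h1 : ∀ n, ε n ≤ 1) :
    (ε 0 : ℝ) / β ≤ ∑' n : ℕ, (ε n : ℝ) / β ^ (n+1) := by
  have hb0 : (0:ℝ) < β := by linarith
  have := Summable.le_tsum (summable_rep hβ1 h1) 0 (fun j _ => by positivity)
  simpa using this

lemma shift_rep {β : ℝ} (hβ1 : 1 < β) {ε : ℕ → ℕ} (h1 : ∀ n, ε n ≤ 1) {y : ℝ}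
    (hy : y = ∑' n : ℕ, (ε n : ℝ) / β ^ (n+1)) :
    β * y - ε 0 = ∑' n : ℕ, (ε (n+1) : ℝ) / β ^ (n+1) := by
  have hb0 : (0:ℝ) < β := by linarith
  have hs := summable_rep hβ1 h1
  rw [Summable.tsum_eq_zero_add hs] at hy
  have h2 : ∀ n : ℕ, (ε (n+1) : ℝ) / β ^ (n+1+1) = (ε (n+1) : ℝ) / β ^ (n+1) * (1/β) := by
    intro n
    rw [pow_succ]
    field_simp
  rw [tsum_congr h2, tsum_mul_right] at hy
  rw [hy]
  have hβne : β ≠ 0 := ne_of_gt hb0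
  field_simp
  ring


lemma cons_le {d : ℕ} (hd : d ≤ 1) {δ : ℕ → ℕ} (hδ : ∀ n, δ n ≤ 1) (n : ℕ) :
    cons d δ n ≤ 1 := by cases n with
  | zero => exact hd
  | succ n => exact hδ n

lemma cons_rep {β : ℝ} (hβ1 : 1 < β) {d : ℕ} (hd : d ≤ 1) {δ : ℕ → ℕ}
    (hδ : ∀ n, δ n ≤ 1) {z : ℝ} (hz : z = ∑' n : ℕ, (δ n : ℝ) / β ^ (n+1)) :
    ((d : ℝ) + z) / β = ∑' n : ℕ, (cons d δ n : ℝ) / β ^ (n+1) := by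
  have hb0 : (0:ℝ) < β := by linarith
  have hs := summable_rep hβ1 (cons_le hd hδ)
  rw [Summable.tsum_eq_zero_add hs]
  have h2 : ∀ n : ℕ, (cons d δ (n+1) : ℝ) / β ^ (n+1+1)
      = (δ n : ℝ) / β ^ (n+1) * (1/β) := by
    intro n
    show (δ n : ℝ) / β ^ (n+1+1) = _
    rw [pow_succ]; field_simp
  rw [tsum_congr h2, tsum_mul_right, ← hz]
  show ((d:ℝ) + z)/β = (d:ℝ)/β^(0+1) + z * (1/β)
  rw [pow_one]
  field_simp

lemma partial_eq {β : ℝ} (hβ1 : 1 < β) (x : ℝ) (n : ℕ) :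
    x = (∑ k ∈ Finset.range n, (dig β x k : ℝ) / β ^ (k+1)) + orb β x n / β ^ n := by
  have hb0 : (0:ℝ) < β := by linarith
  induction n with
  | zero => simp [orb]
  | succ n ih =>
    rw [Finset.sum_range_succ]
    have h1 : orb β x (n+1) / β ^ (n+1)
        = orb β x n / β ^ n - (dig β x n : ℝ) / β ^ (n+1) := by
      rw [orb_succ, pow_succ]
      field_simp
    rw [h1]
    linarith [ih]

lemma greedy_eq {β : ℝ} (hβ1 : 1 < β) (hβ2 : β < 2) {x : ℝ}
    (hx : x ∈ Set.Icc (0:ℝ) (1/(β-1))) :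
    x = ∑' n : ℕ, (dig β x n : ℝ) / β ^ (n+1) := by
  have hb0 : (0:ℝ) < β := by linarith
  have hs := summable_rep hβ1 (dig_le β x)
  have h1 : Filter.Tendsto (fun n => ∑ k ∈ Finset.range n, (dig β x k : ℝ) / β ^ (k+1))
      Filter.atTop (nhds (∑' n : ℕ, (dig β x n : ℝ) / β ^ (n+1))) :=
    hs.hasSum.tendsto_sum_nat
  have hlt : 1/β < 1 := by rw [div_lt_one hb0]; exact hβ1
  have h0 : Filter.Tendsto (fun n => orb β x n / β ^ n) Filter.atTop (nhds 0) := by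
    apply squeeze_zero (fun n => by
      have := (orb_mem hβ1 hβ2 hx n).1
      positivity)
      (g := fun n => (1/(β-1)) * (1/β)^n)
      (fun n => ?_)
    · have := (tendsto_pow_atTop_nhds_zero_of_lt_one (by positivity) hlt).const_mul (1/(β-1))
      simpa using this
    · have hu := (orb_mem hβ1 hβ2 hx n).2
      have hpow : (0:ℝ) < β ^ n := by positivity
      rw [div_le_iff₀ hpow] at *
      calc orb β x n ≤ 1/(β-1) := hu
        _ = 1/(β-1) * (1/β)^n * β^n := by
            rw [mul_assoc, div_pow, one_pow, div_mul_cancel₀]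
            · ring
            · positivity
  have h2 : Filter.Tendsto (fun n => ∑ k ∈ Finset.range n, (dig β x k : ℝ) / β ^ (k+1))
      Filter.atTop (nhds x) := by
    have := Filter.Tendsto.sub (tendsto_const_nhds (x := x) (f := Filter.atTop)) h0
    rw [sub_zero] at this
    refine this.congr (fun n => ?_)
    have := partial_eq hβ1 x n
    linarith
  exact tendsto_nhds_unique h2 h1

lemma force0 {β : ℝ} (hβ1 : 1 < β) {ε : ℕ → ℕ} (h1 : ∀ n, ε n ≤ 1) {y : ℝ}
    (hy : y = ∑' n : ℕ, (ε n : ℝ) / β ^ (n+1)) (h : y < 1/β) : ε 0 = 0 := by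
  by_contra h0
  have he : ε 0 = 1 := by have := h1 0; omega
  have := first_le hβ1 h1
  rw [he, ← hy] at this
  norm_num at this
  rw [one_div] at h
  linarith

lemma force1 {β : ℝ} (hβ1 : 1 < β) {ε : ℕ → ℕ} (h1 : ∀ n, ε n ≤ 1) {y : ℝ}
    (hy : y = ∑' n : ℕ, (ε n : ℝ) / β ^ (n+1)) (h : 1/(β*(β-1)) < y) : ε 0 = 1 := by
  have hb0 : (0:ℝ) < β := by linarith
  have hb1 : (0:ℝ) < β - 1 := by linarith
  by_contra h0
  have he : ε 0 = 0 := by have := h1 0; omega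
  have hsh := shift_rep hβ1 h1 hy
  have hle := rep_le_L hβ1 (fun n => h1 (n+1))
  rw [← hsh, he] at hle
  have : β * (1/(β*(β-1))) < β * y := by
    exact mul_lt_mul_of_pos_left h hb0
  have heq : β * (1/(β*(β-1))) = 1/(β-1) := by field_simp
  rw [heq] at this
  push_cast at hle
  linarith


lemma extend {β : ℝ} (hβ1 : 1 < β) (hβ2 : β < 2) :
    ∀ (n : ℕ) (y : ℝ), y ∈ Set.Icc (0:ℝ) (1/(β-1)) → ∀ δ : ℕ → ℕ, (∀ k, δ k ≤ 1) →
    orb β y n = ∑' k : ℕ, (δ k : ℝ) / β ^ (k+1) →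
    ∃ ε' : ℕ → ℕ, (∀ k, ε' k ≤ 1) ∧ y = ∑' k : ℕ, (ε' k : ℝ) / β ^ (k+1) ∧ ε' n = δ 0 := by
  intro n
  induction n with
  | zero => intro y _ δ hδ h; exact ⟨δ, hδ, h, rfl⟩
  | succ n ih =>
    intro y hy δ hδ h
    rw [orb_shift] at h
    obtain ⟨ε'', h1, h2, h3⟩ := ih (T β y) (T_mem hβ1 hβ2 hy) δ hδ h
    refine ⟨cons (dig β y 0) ε'', cons_le (dig_le β y 0) h1, ?_, h3⟩
    have hcr := cons_rep hβ1 (dig_le β y 0) h1 h2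
    rw [← hcr]
    have hT : T β y = β * y - (dig β y 0 : ℝ) := orb_succ β y 0
    rw [hT]
    have hb0 : (0:ℝ) < β := by linarith
    field_simp
    ring

lemma gap_two {β : ℝ} (hβ1 : 1 < β) (hβ2 : β < 2) {y : ℝ}
    (hy : y ∈ Set.Icc (1/β) (1/(β*(β-1)))) :
    ∃ a b : ℕ → ℕ, (∀ k, a k ≤ 1) ∧ (∀ k, b k ≤ 1) ∧
      y = ∑' n : ℕ, (a n : ℝ) / β ^ (n+1) ∧ y = ∑' n : ℕ, (b n : ℝ) / β ^ (n+1) ∧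
      a 0 = 1 ∧ b 0 = 0 := by
  have hb0 : (0:ℝ) < β := by linarith
  have hb1 : (0:ℝ) < β - 1 := by linarith
  obtain ⟨hyl, hyu⟩ := hy
  have hl : 1 ≤ β * y := by
    have := mul_le_mul_of_nonneg_left hyl (le_of_lt hb0)
    rw [mul_one_div, div_self (ne_of_gt hb0)] at this
    linarith
  have hu : β * y ≤ 1/(β-1) := by
    have := mul_le_mul_of_nonneg_left hyu (le_of_lt hb0)
    have heq : β * (1/(β*(β-1))) = 1/(β-1) := by field_simp
    linarith [heq ▸ this]
  have hz1 : β * y - 1 ∈ Set.Icc (0:ℝ) (1/(β-1)) := ⟨by linarith, by linarith⟩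
  have hz0 : β * y ∈ Set.Icc (0:ℝ) (1/(β-1)) := ⟨by linarith, hu⟩
  refine ⟨cons 1 (dig β (β*y-1)), cons 0 (dig β (β*y)),
    cons_le (Nat.le_refl 1) (dig_le _ _), cons_le (by norm_num) (dig_le _ _), ?_, ?_, rfl, rfl⟩
  · have := cons_rep hβ1 (le_refl 1) (dig_le β (β*y-1)) (greedy_eq hβ1 hβ2 hz1)
    rw [← this]
    push_cast
    field_simp
    ring
  · have := cons_rep hβ1 (Nat.zero_le 1) (dig_le β (β*y)) (greedy_eq hβ1 hβ2 hz0)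
    rw [← this]
    push_cast
    field_simp
    ring

end BetaRepAux

open BetaRepAux

/-- for `β ∈ (1,2)`, `x ∈ (0, 1/(β-1))` has a unique binary
`β`-representation iff the forward orbit of `x` under the map with a gap
`T_β` (`βx` below the gap, `βx - 1` above) is defined for all `n ≥ 0` and
never enters the gap `Δ_β = [1/β, 1/(β(β-1))]`. -/
theorem unique_representation_iff_orbit_avoids_gap
    (β : ℝ) (hβ : β ∈ Set.Ioo (1 : ℝ) 2) (x : ℝ) (hx : x ∈ Set.Ioo (0 : ℝ) (1 / (β - 1))) :
    (∃! ε : ℕ → ℕ, (∀ n, ε n ≤ 1) ∧ x = ∑' n : ℕ, (ε n : ℝ) / β ^ (n + 1)) ↔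
    (∃ o : ℕ → ℝ, o 0 = x ∧ ∀ n : ℕ,
      o n ∈ Set.Icc (0 : ℝ) (1 / (β - 1)) ∧
      o n ∉ Set.Icc (1 / β) (1 / (β * (β - 1))) ∧
      o (n + 1) = if o n < 1 / β then β * o n else β * o n - 1) := by
  obtain ⟨hβ1, hβ2⟩ := hβ
  have hb0 : (0:ℝ) < β := by linarith
  have hxI : x ∈ Set.Icc (0:ℝ) (1/(β-1)) := ⟨hx.1.le, hx.2.le⟩
  constructor
  · rintro ⟨ε, ⟨hε1, hεx⟩, hU⟩
    refine ⟨orb β x, rfl, fun n => ⟨orb_mem hβ1 hβ2 hxI n, ?_, rfl⟩⟩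
    intro hgap
    obtain ⟨a, b, ha1, hb1', hay, hby, ha0, hb00⟩ := gap_two hβ1 hβ2 hgap
    obtain ⟨A, hA1, hAx, hAn⟩ := extend hβ1 hβ2 n x hxI a ha1 hay
    obtain ⟨B, hB1, hBx, hBn⟩ := extend hβ1 hβ2 n x hxI b hb1' hby
    have hAB : A = B := (hU A ⟨hA1, hAx⟩).trans (hU B ⟨hB1, hBx⟩).symm
    rw [hAB, hBn, hb00] at hAn
    rw [ha0] at hAn
    exact Nat.one_ne_zero hAn.symm
  · rintro ⟨o, ho0, ho⟩
    have hoo : ∀ n, o n = orb β x n := by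
      intro n
      induction n with
      | zero => exact ho0
      | succ n ih => rw [(ho n).2.2, ih]; rfl
    refine ⟨dig β x, ⟨dig_le β x, greedy_eq hβ1 hβ2 hxI⟩, ?_⟩
    rintro ε' ⟨hε'1, hε'x⟩
    have step : ∀ n, orb β x n = ∑' k : ℕ, (ε' (n+k) : ℝ) / β ^ (k+1) →
        ε' n = dig β x n ∧ orb β x (n+1) = ∑' k : ℕ, (ε' (n+1+k) : ℝ) / β ^ (k+1) := by
      intro n hn
      have hgap : orb β x n ∉ Set.Icc (1/β) (1/(β*(β-1))) := by
        rw [← hoo n]; exact (ho n).2.1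
      have h1' : ∀ k, ε' (n+k) ≤ 1 := fun k => hε'1 _
      have hsh := shift_rep hβ1 (ε := fun k => ε' (n+k)) h1' hn
      have hsh' : β * orb β x n - (ε' (n+0) : ℝ)
          = ∑' k : ℕ, (ε' (n+(k+1)) : ℝ) / β ^ (k+1) := hsh
      have hre : ∑' k : ℕ, (ε' (n+(k+1)) : ℝ) / β ^ (k+1)
          = ∑' k : ℕ, (ε' (n+1+k) : ℝ) / β ^ (k+1) :=
        tsum_congr fun k => by rw [show n+(k+1) = n+1+k by omega]
      rcases lt_or_ge (orb β x n) (1/β) with hlt | hge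
      · have he : ε' (n+0) = 0 := force0 hβ1 (ε := fun k => ε' (n+k)) h1' hn hlt
        have hd : dig β x n = 0 := by unfold dig; rw [if_pos hlt]
        constructor
        · rw [hd]; simpa using he
        · rw [orb_succ, hd, ← hre, ← hsh', he]
      · have hgt : 1/(β*(β-1)) < orb β x n := by
          simp only [Set.mem_Icc, not_and, not_le] at hgap
          exact hgap hge
        have he : ε' (n+0) = 1 := force1 hβ1 (ε := fun k => ε' (n+k)) h1' hn hgt
        have hd : dig β x n = 1 := by unfold dig; rw [if_neg (not_lt.mpr hge)]
        constructor
        · rw [hd]; simpa using he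
        · rw [orb_succ, hd, ← hre, ← hsh', he]
    have main : ∀ n, orb β x n = ∑' k : ℕ, (ε' (n+k) : ℝ) / β ^ (k+1) := by
      intro n
      induction n with
      | zero => simpa [orb] using hε'x
      | succ n ih => exact (step n ih).2
    funext n
    exact (step n (main n)).1
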